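/- Tightness of the certified upper bound (Case p + o > 1): Let X be a finite set, T, T' ⊆ X nonempty with |T| = |T'|, let o = 1 − |T ∩ T'|/|T|, and let p ∈ [0,1] satisfy p > 1 − o and p·|T| ∈ ℕ. Then there exists f : X → {0,1} such that E_{Unif(T)}[f] = p and E_{Unif(T')}[f] = 1. -/

import Mathlib

/-- tightness, case p + o > 1. With o = 1 − |T∩T'|/|T|, p > 1 − o and
p·|T| ∈ ℕ, there is a {0,1}-valued f with E_{Unif(T)}[f] = p and E_{Unif(T')}[f] = 1. -/
theorem stmt_9 {X : Type*} [Fintype X] [DecidableEq X]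
    (T T' : Finset X) (hT : T.Nonempty) (hT' : T'.Nonempty)
    (hcard : T.card = T'.card) (p : ℝ) (hp0 : 0 ≤ p) (hp1 : p ≤ 1)
    (hpgt : 1 - (1 - (T ∩ T').card / T.card) < p)
    (hnat : ∃ m : ℕ, p * T.card = m) :
    ∃ f : X → ℝ, (∀ x, f x = 0 ∨ f x = 1) ∧
      (∑ x ∈ T, f x / T.card = p) ∧
      (∑ x ∈ T', f x / T'.card = 1) := by
  obtain ⟨m, hm⟩ := hnat
  have hTpos : (0 : ℝ) < T.card := by exact_mod_cast Finset.card_pos.mpr hT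
  have hT'pos : (0 : ℝ) < T'.card := by exact_mod_cast Finset.card_pos.mpr hT'
  have hle1 : (T ∩ T').card ≤ m := by
    have : ((T ∩ T').card : ℝ) < m := by
      have := (div_lt_iff₀ hTpos).mp (by linarith : ((T ∩ T').card : ℝ) / T.card < p)
      linarith [hm ▸ this]
    exact_mod_cast this.le
  have hle2 : m ≤ T.card := by
    have : (m : ℝ) ≤ T.card := by nlinarith
    exact_mod_cast this
  obtain ⟨B, hBsub, hBsup, hBcard⟩ :=
    Finset.exists_subsuperset_card_eq (Finset.inter_subset_left : T ∩ T' ⊆ T) hle1 hle2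
  refine ⟨fun x => if x ∈ B ∪ T' then 1 else 0, fun x => by by_cases h : x ∈ B ∪ T' <;> simp [h],
    ?_, ?_⟩
  · have key : T ∩ (B ∪ T') = B := by
      rw [Finset.inter_union_distrib_left, Finset.inter_eq_right.mpr hBsup,
        Finset.union_eq_left.mpr hBsub]
    rw [← Finset.sum_div, Finset.sum_ite_mem, key]
    simp only [Finset.sum_const, nsmul_eq_mul, mul_one, hBcard]
    field_simp
    linarith
  · have key : T' ∩ (B ∪ T') = T' := Finset.inter_eq_left.mpr Finset.subset_union_right
    rw [← Finset.sum_div, Finset.sum_ite_mem, key]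
    simp
    exact hT'.ne_empty
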